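/- Let M be a module of the Virasoro algebra on which C acts as the scalar −2, and let v⁰, v¹ ∈ M satisfy L_{−n}·v⁰ = L_{−n}·v¹ = 0 for all n ≥ 1, L_0·v⁰ = 0 and L_0·v¹ = v⁰. Set w := 2·L_2·L_1·v¹ − L_1·L_1·L_1·v¹ − L_3·v⁰ and let J := U(𝔏)·(L_1·v⁰) be the submodule generated by L_1·v⁰. Then: (i) L_0·w − 3·w ∈ J; (ii) L_{−1}·w ∈ J and L_{−3}·w ∈ J; and (iii) L_{−2}·w = −15·(L_1·v⁰). -/
import Mathlib


/-- A representation of the Virasoro algebra on a complex vector space `V`: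
a family of operators `L n` (`n : ℤ`) and an operator `C` satisfying the Virasoro
commutation relations
`[L m, L n] = (n - m) L (m+n) + (C/12)(n³ - n) δ_{m+n,0}` and `[C, L n] = 0`. -/
structure VirasoroRep (V : Type) [AddCommGroup V] [Module ℂ V] where
  L : ℤ → Module.End ℂ V
  C : Module.End ℂ V
  comm_LL : ∀ m n : ℤ, L m * L n - L n * L m =
      ((n : ℂ) - (m : ℂ)) • L (m + n) +
        (if m + n = 0 then (((n : ℂ) ^ 3 - (n : ℂ)) / 12) else 0) • C
  comm_CL : ∀ n : ℤ, C * L n - L n * C = 0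

namespace VirasoroRep

variable {V W : Type} [AddCommGroup V] [Module ℂ V] [AddCommGroup W] [Module ℂ W]

/-- `v` is a singular vector of weight `(h, c)`: it is annihilated by all `L (-n)`, `n ≥ 1`,
and is an eigenvector of `L 0` and `C` with eigenvalues `h` resp. `c`. -/
def IsSingular (ρ : VirasoroRep V) (h c : ℂ) (v : V) : Prop :=
  (∀ n : ℤ, 1 ≤ n → ρ.L (-n) v = 0) ∧ ρ.L 0 v = h • v ∧ ρ.C v = c • v

/-- A linear subspace invariant under the Virasoro action, i.e. an `𝔏`-submodule. -/
def Invariant (ρ : VirasoroRep V) (p : Submodule ℂ V) : Prop :=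
  (∀ n : ℤ, ∀ x ∈ p, ρ.L n x ∈ p) ∧ ∀ x ∈ p, ρ.C x ∈ p

/-- The `𝔏`-submodule `U(𝔏)·v` generated by a vector `v`: the smallest invariant subspace
containing `v`. -/
def gen (ρ : VirasoroRep V) (v : V) : Submodule ℂ V :=
  sInf {p : Submodule ℂ V | ρ.Invariant p ∧ v ∈ p}

/-- The vector `v` generates the module: `U(𝔏)·v` is everything. -/
def Generates (ρ : VirasoroRep V) (v : V) : Prop :=
  ∀ p : Submodule ℂ V, ρ.Invariant p → v ∈ p → p = ⊤

/-- A homomorphism of Virasoro modules: a linear map intertwining the actions. -/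
def IsHom (ρ : VirasoroRep V) (σ : VirasoroRep W) (f : V →ₗ[ℂ] W) : Prop :=
  (∀ (n : ℤ) (x : V), f (ρ.L n x) = σ.L n (f x)) ∧ ∀ x : V, f (ρ.C x) = σ.C (f x)

end VirasoroRep

/-- At central charge `c = −2` and lowest weight `0`, for lowest weight vectors `v⁰, v¹` with
`L₀ v⁰ = 0`, `L₀ v¹ = v⁰`, both annihilated by all lowering operators, the vector
`w := 2·L₂L₁v¹ − L₁³v¹ − L₃v⁰` satisfies, with `J := U(𝔏)·(L₁ v⁰)`:
(i) `L₀ w − 3w ∈ J`; (ii) `L₋₁ w ∈ J` and `L₋₃ w ∈ J`; (iii) `L₋₂ w = −15·L₁ v⁰`. -/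
theorem jordan_verma_c_neg_two_level_three_singular_vector
    (V : Type) [AddCommGroup V] [Module ℂ V] (ρ : VirasoroRep V)
    (hC : ∀ x : V, ρ.C x = (-2 : ℂ) • x)
    (v0 v1 : V)
    (hlow : ∀ n : ℤ, 1 ≤ n → ρ.L (-n) v0 = 0 ∧ ρ.L (-n) v1 = 0)
    (h0 : ρ.L 0 v0 = 0) (h1 : ρ.L 0 v1 = v0) :
    (ρ.L 0 ((2 : ℂ) • ρ.L 2 (ρ.L 1 v1) - ρ.L 1 (ρ.L 1 (ρ.L 1 v1)) - ρ.L 3 v0)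
        - (3 : ℂ) • ((2 : ℂ) • ρ.L 2 (ρ.L 1 v1) - ρ.L 1 (ρ.L 1 (ρ.L 1 v1)) - ρ.L 3 v0)
      ∈ ρ.gen (ρ.L 1 v0)) ∧
    (ρ.L (-1) ((2 : ℂ) • ρ.L 2 (ρ.L 1 v1) - ρ.L 1 (ρ.L 1 (ρ.L 1 v1)) - ρ.L 3 v0)
      ∈ ρ.gen (ρ.L 1 v0)) ∧
    (ρ.L (-3) ((2 : ℂ) • ρ.L 2 (ρ.L 1 v1) - ρ.L 1 (ρ.L 1 (ρ.L 1 v1)) - ρ.L 3 v0)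
      ∈ ρ.gen (ρ.L 1 v0)) ∧
    (ρ.L (-2) ((2 : ℂ) • ρ.L 2 (ρ.L 1 v1) - ρ.L 1 (ρ.L 1 (ρ.L 1 v1)) - ρ.L 3 v0)
      = (-15 : ℂ) • ρ.L 1 v0) := by
  have key : ∀ m n : ℤ, ∀ x : V, ρ.L m (ρ.L n x) =
      (((n : ℂ) - (m : ℂ)) • ρ.L (m + n) x +
        (if m + n = 0 then (((n : ℂ) ^ 3 - (n : ℂ)) / 12) else 0) • ((-2 : ℂ) • x))
      + ρ.L n (ρ.L m x) := by
    intro m n x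
    have h := DFunLike.congr_fun (ρ.comm_LL m n) x
    simp only [LinearMap.sub_apply, Module.End.mul_apply, LinearMap.add_apply,
      LinearMap.smul_apply, hC] at h
    exact eq_add_of_sub_eq h
  have z1 : ρ.L (-1) v0 = 0 := (hlow 1 (by norm_num)).1
  have z2 : ρ.L (-2) v0 = 0 := (hlow 2 (by norm_num)).1
  have z3 : ρ.L (-3) v0 = 0 := (hlow 3 (by norm_num)).1
  have y1 : ρ.L (-1) v1 = 0 := (hlow 1 (by norm_num)).2
  have y2 : ρ.L (-2) v1 = 0 := (hlow 2 (by norm_num)).2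
  have y3 : ρ.L (-3) v1 = 0 := (hlow 3 (by norm_num)).2
  have hL01 : ρ.L 0 (ρ.L 1 v1) = ρ.L 1 v0 + ρ.L 1 v1 := by
    have h := key 0 1 v1
    norm_num [h1] at h
    rw [h]; module
  have hm1a : ρ.L (-1) (ρ.L 1 v1) = (2 : ℂ) • v0 := by
    have h := key (-1) 1 v1
    norm_num [h1, y1] at h
    rw [h]
  have hm2a : ρ.L (-2) (ρ.L 1 v1) = 0 := by
    have h := key (-2) 1 v1
    norm_num [y1, y2] at h
    rw [h]
  have hm3a : ρ.L (-3) (ρ.L 1 v1) = 0 := by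
    have h := key (-3) 1 v1
    norm_num [y2, y3] at h
    rw [h]
  have hm1b : ρ.L (-1) (ρ.L 1 (ρ.L 1 v1)) = (4 : ℂ) • ρ.L 1 v0 + (2 : ℂ) • ρ.L 1 v1 := by
    have h := key (-1) 1 (ρ.L 1 v1)
    norm_num [hm1a, hL01, map_smul] at h
    rw [h]; module
  have hm2b : ρ.L (-2) (ρ.L 1 (ρ.L 1 v1)) = (6 : ℂ) • v0 := by
    have h := key (-2) 1 (ρ.L 1 v1)
    norm_num [hm1a, hm2a] at h
    rw [h]; module
  have hm3b : ρ.L (-3) (ρ.L 1 (ρ.L 1 v1)) = 0 := by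
    have h := key (-3) 1 (ρ.L 1 v1)
    norm_num [hm2a, hm3a] at h
    rw [h]
  have hL0b : ρ.L 0 (ρ.L 1 (ρ.L 1 v1)) = ρ.L 1 (ρ.L 1 v0) + (2 : ℂ) • ρ.L 1 (ρ.L 1 v1) := by
    have h := key 0 1 (ρ.L 1 v1)
    norm_num [hL01, map_add] at h
    rw [h]; module
  have hm2c : ρ.L (-2) (ρ.L 2 (ρ.L 1 v1)) = (4 : ℂ) • ρ.L 1 v0 + (3 : ℂ) • ρ.L 1 v1 := by
    have h := key (-2) 2 (ρ.L 1 v1)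
    norm_num [hm2a, hL01] at h
    rw [h]; module
  have hm2d : ρ.L (-2) (ρ.L 1 (ρ.L 1 (ρ.L 1 v1))) =
      (18 : ℂ) • ρ.L 1 v0 + (6 : ℂ) • ρ.L 1 v1 := by
    have h := key (-2) 1 (ρ.L 1 (ρ.L 1 v1))
    norm_num [hm1b, hm2b, map_add, map_smul] at h
    rw [h]; module
  have hm2e : ρ.L (-2) (ρ.L 3 v0) = (5 : ℂ) • ρ.L 1 v0 := by
    have h := key (-2) 3 v0
    norm_num [z2] at h
    rw [h]
  have hm1c : ρ.L (-1) (ρ.L 2 (ρ.L 1 v1)) =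
      (2 : ℂ) • ρ.L 2 v0 + (3 : ℂ) • ρ.L 1 (ρ.L 1 v1) := by
    have h := key (-1) 2 (ρ.L 1 v1)
    norm_num [hm1a, map_smul] at h
    rw [h]; module
  have hm1d : ρ.L (-1) (ρ.L 1 (ρ.L 1 (ρ.L 1 v1))) =
      (6 : ℂ) • ρ.L 1 (ρ.L 1 v0) + (6 : ℂ) • ρ.L 1 (ρ.L 1 v1) := by
    have h := key (-1) 1 (ρ.L 1 (ρ.L 1 v1))
    norm_num [hm1b, hL0b, map_add, map_smul] at h
    rw [h]; module
  have hm1e : ρ.L (-1) (ρ.L 3 v0) = (4 : ℂ) • ρ.L 2 v0 := by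
    have h := key (-1) 3 v0
    norm_num [z1] at h
    rw [h]
  have hm3c : ρ.L (-3) (ρ.L 2 (ρ.L 1 v1)) = (10 : ℂ) • v0 := by
    have h := key (-3) 2 (ρ.L 1 v1)
    norm_num [hm1a, hm3a] at h
    rw [h]; module
  have hm3d : ρ.L (-3) (ρ.L 1 (ρ.L 1 (ρ.L 1 v1))) = (24 : ℂ) • v0 := by
    have h := key (-3) 1 (ρ.L 1 (ρ.L 1 v1))
    norm_num [hm2b, hm3b, map_smul] at h
    rw [h]; module
  have hm3e : ρ.L (-3) (ρ.L 3 v0) = (-4 : ℂ) • v0 := by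
    have h := key (-3) 3 v0
    norm_num [z3, h0] at h
    rw [h]; module
  have hL0c : ρ.L 0 (ρ.L 2 (ρ.L 1 v1)) =
      ρ.L 2 (ρ.L 1 v0) + (3 : ℂ) • ρ.L 2 (ρ.L 1 v1) := by
    have h := key 0 2 (ρ.L 1 v1)
    norm_num [hL01, map_add] at h
    rw [h]; module
  have hL0d : ρ.L 0 (ρ.L 1 (ρ.L 1 (ρ.L 1 v1))) =
      ρ.L 1 (ρ.L 1 (ρ.L 1 v0)) + (3 : ℂ) • ρ.L 1 (ρ.L 1 (ρ.L 1 v1)) := by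
    have h := key 0 1 (ρ.L 1 (ρ.L 1 v1))
    norm_num [hL0b, map_add, map_smul] at h
    rw [h]; module
  have hL0e : ρ.L 0 (ρ.L 3 v0) = (3 : ℂ) • ρ.L 3 v0 := by
    have h := key 0 3 v0
    norm_num [h0] at h
    rw [h]
  have hJmem : ρ.L 1 v0 ∈ ρ.gen (ρ.L 1 v0) := by
    simp only [VirasoroRep.gen, Submodule.mem_sInf]
    intro p hp; exact hp.2
  have hJinv : ∀ n : ℤ, ∀ x ∈ ρ.gen (ρ.L 1 v0), ρ.L n x ∈ ρ.gen (ρ.L 1 v0) := by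
    intro n x hx
    simp only [VirasoroRep.gen, Submodule.mem_sInf] at hx ⊢
    intro p hp; exact hp.1.1 n x (hx p hp)
  refine ⟨?_, ?_, ?_, ?_⟩
  · have e : ρ.L 0 ((2 : ℂ) • ρ.L 2 (ρ.L 1 v1) - ρ.L 1 (ρ.L 1 (ρ.L 1 v1)) - ρ.L 3 v0)
        - (3 : ℂ) • ((2 : ℂ) • ρ.L 2 (ρ.L 1 v1) - ρ.L 1 (ρ.L 1 (ρ.L 1 v1)) - ρ.L 3 v0)
        = (2 : ℂ) • ρ.L 2 (ρ.L 1 v0) - ρ.L 1 (ρ.L 1 (ρ.L 1 v0)) := by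
      simp only [map_sub, map_smul, hL0c, hL0d, hL0e]
      module
    rw [e]
    exact Submodule.sub_mem _ (Submodule.smul_mem _ _ (hJinv 2 _ hJmem))
      (hJinv 1 _ (hJinv 1 _ hJmem))
  · have e : ρ.L (-1) ((2 : ℂ) • ρ.L 2 (ρ.L 1 v1) - ρ.L 1 (ρ.L 1 (ρ.L 1 v1)) - ρ.L 3 v0)
        = (-6 : ℂ) • ρ.L 1 (ρ.L 1 v0) := by
      simp only [map_sub, map_smul, hm1c, hm1d, hm1e]
      module
    rw [e]
    exact Submodule.smul_mem _ _ (hJinv 1 _ hJmem)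
  · have e : ρ.L (-3) ((2 : ℂ) • ρ.L 2 (ρ.L 1 v1) - ρ.L 1 (ρ.L 1 (ρ.L 1 v1)) - ρ.L 3 v0)
        = 0 := by
      simp only [map_sub, map_smul, hm3c, hm3d, hm3e]
      module
    rw [e]
    exact Submodule.zero_mem _
  · simp only [map_sub, map_smul, hm2c, hm2d, hm2e]
    module
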